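/- Let q be a convex quadratic function on R^2 with homogeneous quadratic part q̂, and let T be a triangle with an edge e. Then the L¹ interpolation error decrease from bisecting e satisfies D_T(e,q) = (|T|/12)·q̂(e). Consequently, an edge e of T maximizes D_T(·,q) among the three edges if and only if it maximizes q̂(e), i.e. if and only if it is longest in the q-metric |v|_q := √(q̂(v)). -/

import Mathlib

open MeasureTheory

/-- The 2D cross product / determinant of two vectors of `ℝ × ℝ`. -/
noncomputable def det2 (u v : ℝ × ℝ) : ℝ := u.1 * v.2 - u.2 * v.1

/-- The area of the triangle with vertices `p0, p1, p2`. -/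
noncomputable def triArea (p0 p1 p2 : ℝ × ℝ) : ℝ := |det2 (p1 - p0) (p2 - p0)| / 2

/-- The (closed) triangle with vertices `p0, p1, p2`. -/
def tri (p0 p1 p2 : ℝ × ℝ) : Set (ℝ × ℝ) := convexHull ℝ {p0, p1, p2}

/-- The affine interpolation of `f` at the vertices `p0, p1, p2`, written with
barycentric coordinates; for affinely independent vertices it is the unique
affine function agreeing with `f` at the three vertices. -/
noncomputable def interp (p0 p1 p2 : ℝ × ℝ) (f : ℝ × ℝ → ℝ) (x : ℝ × ℝ) : ℝ :=
  (det2 (p1 - x) (p2 - x) * f p0 + det2 (p2 - x) (p0 - x) * f p1 +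
    det2 (p0 - x) (p1 - x) * f p2) / det2 (p1 - p0) (p2 - p0)

/-- The `L¹` interpolation error `‖f − I_T f‖_{L¹(T)}` on the triangle `T` with
vertices `p0, p1, p2`. -/
noncomputable def interpErr (p0 p1 p2 : ℝ × ℝ) (f : ℝ × ℝ → ℝ) : ℝ :=
  ∫ x in tri p0 p1 p2, |f x - interp p0 p1 p2 f x|

/-- The decrease `D_T(e,f)` of the `L¹` interpolation error when the triangle
with vertices `z0, z1, z2` is bisected from the midpoint of the edge `e = [z0,z1]`
to the opposite vertex `z2`. -/
noncomputable def Ddec (z0 z1 z2 : ℝ × ℝ) (f : ℝ × ℝ → ℝ) : ℝ :=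
  interpErr z0 z1 z2 f - interpErr z0 (midpoint ℝ z0 z1) z2 f -
    interpErr (midpoint ℝ z0 z1) z1 z2 f

/-- for a convex quadratic `q` with positive definite homogeneous
part `qh`, the `L¹` interpolation error decrease from bisecting the edge
`[z0,z1]` of a triangle `T` is `D_T(e,q) = (|T|/12)·qh(e)`; consequently an edge
maximizes `D_T(·,q)` among the three edges iff it maximizes `qh`, i.e. iff it is
longest in the `q`-metric. -/
def stdTri : Set (ℝ × ℝ) := {p | 0 ≤ p.1 ∧ 0 ≤ p.2 ∧ p.1 + p.2 ≤ 1}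

lemma convex_stdTri : Convex ℝ stdTri := by
  intro x hx y hy a b ha hb hab
  obtain ⟨h1, h2, h3⟩ := hx; obtain ⟨g1, g2, g3⟩ := hy
  refine ⟨?_, ?_, ?_⟩ <;> simp only [Prod.smul_fst, Prod.smul_snd, Prod.fst_add, Prod.snd_add,
    smul_eq_mul] <;> nlinarith

lemma tri_unit : tri ((0:ℝ),(0:ℝ)) (1,0) (0,1) = stdTri := by
  apply le_antisymm
  · apply convexHull_min _ convex_stdTri
    rintro p (rfl | rfl | rfl) <;> norm_num [stdTri]
  · rintro ⟨s, t⟩ ⟨h1, h2, h3⟩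
    have := Finset.centerMass_mem_convexHull (R := ℝ) (E := ℝ × ℝ)
      (s := {((0:ℝ),(0:ℝ)), (1,0), (0,1)}) (Finset.univ : Finset (Fin 3))
      (w := ![1 - s - t, s, t]) (z := ![((0:ℝ),(0:ℝ)), (1,0), (0,1)])
      (by intro i _; fin_cases i <;> simp <;> linarith)
      (by simp [Fin.sum_univ_three]; linarith)
      (by intro i _; fin_cases i <;> simp)
    convert this using 1
    · rfl
    rw [Finset.centerMass]
    have hsum : (∑ i : Fin 3, ![1 - s - t, s, t] i) = 1 := by
      simp [Fin.sum_univ_three]; try ring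
    rw [hsum]
    simp [Fin.sum_univ_three, Prod.ext_iff]

lemma measurableSet_stdTri : MeasurableSet stdTri := by
  have : stdTri = {p : ℝ × ℝ | 0 ≤ p.1} ∩ ({p : ℝ × ℝ | 0 ≤ p.2} ∩ {p : ℝ × ℝ | p.1 + p.2 ≤ 1}) := by
    ext p; simp [stdTri]
  rw [this]
  exact (measurableSet_le measurable_const measurable_fst).inter
    ((measurableSet_le measurable_const measurable_snd).inter
      (measurableSet_le (measurable_fst.add measurable_snd) measurable_const))

lemma isCompact_stdTri : IsCompact stdTri := by
  rw [← tri_unit]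
  exact (((Set.finite_singleton _).insert _).insert _).isCompact_convexHull ℝ

lemma integral_stdTri (F : ℝ × ℝ → ℝ) (hF : Continuous F) :
    ∫ p in stdTri, F p = ∫ s in (0:ℝ)..1, ∫ t in (0:ℝ)..(1-s), F (s, t) := by
  have hInt : IntegrableOn F stdTri := hF.continuousOn.integrableOn_compact isCompact_stdTri
  rw [← integral_indicator measurableSet_stdTri]
  rw [show (volume : Measure (ℝ × ℝ)) = (volume : Measure ℝ).prod volume from
    Measure.volume_eq_prod ℝ ℝ]
  rw [MeasureTheory.integral_prod]
  · have hslice : ∀ s : ℝ, (fun t => stdTri.indicator F (s, t)) =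
        fun t => ((fun t => (s, t)) ⁻¹' stdTri).indicator (fun t => F (s, t)) t := by
      intro s; funext t; rfl
    have houter : (fun s => ∫ t, stdTri.indicator F (s, t)) =
        (Set.Icc (0:ℝ) 1).indicator (fun s => ∫ t in Set.Icc (0:ℝ) (1-s), F (s, t)) := by
      funext s
      rw [hslice s, integral_indicator (measurable_prodMk_left measurableSet_stdTri)]
      by_cases hs : s ∈ Set.Icc (0:ℝ) 1
      · have : (fun t => ((s : ℝ), t)) ⁻¹' stdTri = Set.Icc 0 (1 - s) := by
          ext t; simp [stdTri, Set.mem_Icc]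
          constructor
          · rintro ⟨_, h2, h3⟩; exact ⟨h2, by linarith⟩
          · rintro ⟨h2, h3⟩; exact ⟨hs.1, h2, by linarith⟩
        rw [this, Set.indicator_of_mem hs]
      · have : (fun t => ((s : ℝ), t)) ⁻¹' stdTri = ∅ := by
          ext t
          simp only [Set.mem_preimage, Set.mem_empty_iff_false, iff_false]
          rintro ⟨h1, h2, h3⟩
          simp only [Set.mem_Icc] at hs
          rcases lt_or_ge s 0 with h | h
          · exact absurd h1 (not_le.mpr h)
          · have h4 : 1 < s := by
              by_contra hle; push_neg at hle; exact hs ⟨h, hle⟩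
            linarith
        rw [this, Set.indicator_of_notMem hs]
        simp
    rw [houter, integral_indicator measurableSet_Icc]
    rw [MeasureTheory.integral_Icc_eq_integral_Ioc, ← intervalIntegral.integral_of_le zero_le_one]
    apply intervalIntegral.integral_congr
    intro s hs
    rw [Set.uIcc_of_le zero_le_one, Set.mem_Icc] at hs
    show ∫ t in Set.Icc (0:ℝ) (1-s), F (s, t) = ∫ t in (0:ℝ)..(1-s), F (s, t)
    rw [MeasureTheory.integral_Icc_eq_integral_Ioc,
      ← intervalIntegral.integral_of_le (by linarith : (0:ℝ) ≤ 1 - s)]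
  · exact hInt.integrable_indicator measurableSet_stdTri

lemma hasDerivAt_poly3 (c0 c1 c2 c3 x : ℝ) :
    HasDerivAt (fun y => c0*y + c1*y^2/2 + c2*y^3/3 + c3*y^4/4)
      (c0 + c1*x + c2*x^2 + c3*x^3) x := by
  have h1 : HasDerivAt (fun y : ℝ => y) 1 x := hasDerivAt_id x
  have h2 : HasDerivAt (fun y : ℝ => y^2) (2*x) x := by simpa using hasDerivAt_pow 2 x
  have h3 : HasDerivAt (fun y : ℝ => y^3) (3*x^2) x := by
    simpa using hasDerivAt_pow 3 x
  have h4 : HasDerivAt (fun y : ℝ => y^4) (4*x^3) x := by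
    simpa using hasDerivAt_pow 4 x
  have h := (((h1.const_mul c0).add ((h2.const_mul c1).div_const 2)).add
    ((h3.const_mul c2).div_const 3)).add ((h4.const_mul c3).div_const 4)
  convert h using 1
  · rfl
  · rfl
  · rfl
  ring

lemma poly_intervalIntegral (c0 c1 c2 c3 b : ℝ) :
    ∫ x in (0:ℝ)..b, (c0 + c1*x + c2*x^2 + c3*x^3)
      = c0*b + c1*b^2/2 + c2*b^3/3 + c3*b^4/4 := by
  rw [intervalIntegral.integral_eq_sub_of_hasDerivAt
    (fun x _ => hasDerivAt_poly3 c0 c1 c2 c3 x)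
    (Continuous.intervalIntegrable (by fun_prop) _ _)]
  ring

lemma integral_stdTri_poly (A B C : ℝ) :
    ∫ p in stdTri, (A * (p.1 * (1 - p.1 - p.2)) + B * (p.2 * (1 - p.1 - p.2)) + C * (p.1 * p.2))
      = (A + B + C) / 24 := by
  rw [integral_stdTri _ (by fun_prop)]
  have inner : ∀ s ∈ Set.uIcc (0:ℝ) 1, (fun s => ∫ t in (0:ℝ)..(1-s),
      (A * (s * (1 - s - t)) + B * (t * (1 - s - t)) + C * (s * t))) s
      = (fun s => B/6 + (A/2 - B/2 + C/2)*s + (-A + B/2 - C)*s^2 + (A/2 - B/6 + C/2)*s^3) s := by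
    intro s _
    show ∫ t in (0:ℝ)..(1-s), (A * (s * (1 - s - t)) + B * (t * (1 - s - t)) + C * (s * t)) = _
    have : ∀ t : ℝ, A * (s * (1 - s - t)) + B * (t * (1 - s - t)) + C * (s * t)
        = (A*(s*(1-s))) + (B*(1-s) - A*s + C*s)*t + (-B)*t^2 + 0*t^3 := by
      intro t; ring
    rw [intervalIntegral.integral_congr (g := fun t =>
        (A*(s*(1-s))) + (B*(1-s) - A*s + C*s)*t + (-B)*t^2 + 0*t^3) (fun t _ => this t)]
    rw [poly_intervalIntegral]
    ring
  rw [intervalIntegral.integral_congr inner]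
  rw [poly_intervalIntegral (B/6) (A/2 - B/2 + C/2) (-A + B/2 - C) (A/2 - B/6 + C/2) 1]
  ring

noncomputable def linUV (u v : ℝ × ℝ) : (ℝ × ℝ) →ₗ[ℝ] (ℝ × ℝ) :=
  (LinearMap.fst ℝ ℝ ℝ).smulRight u + (LinearMap.snd ℝ ℝ ℝ).smulRight v

lemma linUV_apply (u v p : ℝ × ℝ) : linUV u v p = p.1 • u + p.2 • v := rfl

lemma det_linUV (u v : ℝ × ℝ) : LinearMap.det (linUV u v) = det2 u v := by
  rw [← LinearMap.det_toMatrix (Module.Basis.finTwoProd ℝ), Matrix.det_fin_two]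
  simp [LinearMap.toMatrix_apply, linUV_apply, det2, Module.Basis.finTwoProd]
  ring

lemma setIntegral_tri_param (z0 u v : ℝ × ℝ) (hd : det2 u v ≠ 0) (g : ℝ × ℝ → ℝ) :
    ∫ x in tri z0 (z0 + u) (z0 + v), g x
      = |det2 u v| * ∫ p in stdTri, g (z0 + (p.1 • u + p.2 • v)) := by
  set L := linUV u v
  set φ : (ℝ × ℝ) →ᵃ[ℝ] (ℝ × ℝ) := AffineMap.const ℝ (ℝ × ℝ) z0 + L.toAffineMap with hφ
  have hφ_apply : ∀ p, φ p = z0 + (p.1 • u + p.2 • v) := by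
    intro p; simp [hφ, AffineMap.const_apply, linUV_apply, L]
  have himg : ⇑φ '' stdTri = tri z0 (z0 + u) (z0 + v) := by
    rw [← tri_unit, tri, AffineMap.image_convexHull, tri]
    congr 1
    rw [Set.image_insert_eq, Set.image_insert_eq, Set.image_singleton]
    simp [hφ_apply]
  have hinj : Set.InjOn ⇑φ stdTri := by
    intro p _ p' _ h
    rw [hφ_apply, hφ_apply] at h
    have h' : p.1 • u + p.2 • v = p'.1 • u + p'.2 • v := by
      have := add_left_cancel h; exact this
    have h1 : p.1 * u.1 + p.2 * v.1 = p'.1 * u.1 + p'.2 * v.1 := congrArg Prod.fst h'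
    have h2 : p.1 * u.2 + p.2 * v.2 = p'.1 * u.2 + p'.2 * v.2 := congrArg Prod.snd h'
    have ha : (p.1 - p'.1) * det2 u v = 0 := by unfold det2; linear_combination v.2 * h1 - v.1 * h2
    have hb : (p.2 - p'.2) * det2 u v = 0 := by unfold det2; linear_combination u.1 * h2 - u.2 * h1
    have ha' : p.1 = p'.1 := by
      rcases mul_eq_zero.mp ha with h | h
      · linarith
      · exact absurd h hd
    have hb' : p.2 = p'.2 := by
      rcases mul_eq_zero.mp hb with h | h
      · linarith
      · exact absurd h hd
    exact Prod.ext ha' hb'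
  have hderiv : ∀ x ∈ stdTri, HasFDerivWithinAt ⇑φ
      (LinearMap.toContinuousLinearMap L) stdTri x := by
    intro x _
    have : HasFDerivAt (fun p => z0 + (p.1 • u + p.2 • v))
        (LinearMap.toContinuousLinearMap L) x := by
      have hL : HasFDerivAt (fun p : ℝ × ℝ => (LinearMap.toContinuousLinearMap L) p)
          (LinearMap.toContinuousLinearMap L) x :=
        (LinearMap.toContinuousLinearMap L).hasFDerivAt
      have := hL.const_add z0
      convert this using 2
      all_goals rfl
    exact (this.congr_fderiv rfl).hasFDerivWithinAt.congr
      (fun y _ => (hφ_apply y).symm) (hφ_apply x).symm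
  calc ∫ x in tri z0 (z0 + u) (z0 + v), g x = ∫ x in ⇑φ '' stdTri, g x := by rw [himg]
    _ = ∫ x in stdTri, |(LinearMap.toContinuousLinearMap L).det| • g (φ x) :=
        integral_image_eq_integral_abs_det_fderiv_smul volume measurableSet_stdTri
          (fun x hx => hderiv x hx) hinj g
    _ = |det2 u v| * ∫ p in stdTri, g (z0 + (p.1 • u + p.2 • v)) := by
        have hd2 : (LinearMap.toContinuousLinearMap L).det = det2 u v := by
          rw [ContinuousLinearMap.det]; simpa using det_linUV u v
        simp only [hd2, smul_eq_mul, hφ_apply]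
        rw [MeasureTheory.integral_const_mul]

lemma interp_param (p0 u v : ℝ × ℝ) (hd : det2 u v ≠ 0) (f : ℝ × ℝ → ℝ) (s t : ℝ) :
    interp p0 (p0 + u) (p0 + v) f (p0 + (s • u + t • v))
      = (1 - s - t) * f p0 + s * f (p0 + u) + t * f (p0 + v) := by
  obtain ⟨u1, u2⟩ := u; obtain ⟨v1, v2⟩ := v; obtain ⟨x0, y0⟩ := p0
  simp only [det2, Prod.mk_add_mk, Prod.smul_mk, smul_eq_mul, Prod.mk_sub_mk, interp] at *
  have hD : (x0 + u1 - x0) * (y0 + v2 - y0) - (y0 + u2 - y0) * (x0 + v1 - x0) = u1 * v2 - u2 * v1 := by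
    ring
  rw [hD, div_eq_iff hd]
  ring

lemma quad_identity (a20 a11 a02 a10 a01 a00 : ℝ) (p0 u v : ℝ × ℝ) (s t : ℝ)
    (q qh : ℝ × ℝ → ℝ)
    (hq : q = fun p => a20 * p.1 ^ 2 + 2 * a11 * p.1 * p.2 + a02 * p.2 ^ 2 +
      a10 * p.1 + a01 * p.2 + a00)
    (hqh : qh = fun p => a20 * p.1 ^ 2 + 2 * a11 * p.1 * p.2 + a02 * p.2 ^ 2) :
    ((1 - s - t) * q p0 + s * q (p0 + u) + t * q (p0 + v)) - q (p0 + (s • u + t • v))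
      = qh u * (s * (1 - s - t)) + qh v * (t * (1 - s - t)) + qh (v - u) * (s * t) := by
  subst hq hqh
  obtain ⟨u1, u2⟩ := u; obtain ⟨v1, v2⟩ := v; obtain ⟨x0, y0⟩ := p0
  simp only [Prod.mk_add_mk, Prod.smul_mk, smul_eq_mul, Prod.mk_sub_mk]
  ring

lemma interpErr_formula (a20 a11 a02 a10 a01 a00 : ℝ) (q qh : ℝ × ℝ → ℝ)
    (hq : q = fun p => a20 * p.1 ^ 2 + 2 * a11 * p.1 * p.2 + a02 * p.2 ^ 2 +
      a10 * p.1 + a01 * p.2 + a00)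
    (hqh : qh = fun p => a20 * p.1 ^ 2 + 2 * a11 * p.1 * p.2 + a02 * p.2 ^ 2)
    (hnn : ∀ w : ℝ × ℝ, 0 ≤ qh w)
    (p0 p1 p2 : ℝ × ℝ) (hd : det2 (p1 - p0) (p2 - p0) ≠ 0) :
    (∫ x in tri p0 p1 p2, |q x - interp p0 p1 p2 q x|)
      = |det2 (p1 - p0) (p2 - p0)| / 24 * (qh (p1 - p0) + qh (p2 - p0) + qh (p2 - p1)) := by
  set u := p1 - p0 with hu
  set v := p2 - p0 with hv
  have hp1 : p1 = p0 + u := by rw [hu]; abel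
  have hp2 : p2 = p0 + v := by rw [hv]; abel
  have hvu : p2 - p1 = v - u := by rw [hu, hv]; abel
  rw [hp1, hp2, hvu] at *
  rw [setIntegral_tri_param p0 u v hd]
  have heq : Set.EqOn
      (fun p : ℝ × ℝ => |q (p0 + (p.1 • u + p.2 • v)) -
        interp p0 (p0 + u) (p0 + v) q (p0 + (p.1 • u + p.2 • v))|)
      (fun p : ℝ × ℝ => qh u * (p.1 * (1 - p.1 - p.2)) + qh v * (p.2 * (1 - p.1 - p.2)) +
        qh (v - u) * (p.1 * p.2)) stdTri := by
    intro p hp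
    obtain ⟨h1, h2, h3⟩ := hp
    have hkey := quad_identity a20 a11 a02 a10 a01 a00 p0 u v p.1 p.2 q qh hq hqh
    have hinterp := interp_param p0 u v hd q p.1 p.2
    have hval : q (p0 + (p.1 • u + p.2 • v)) -
        interp p0 (p0 + u) (p0 + v) q (p0 + (p.1 • u + p.2 • v))
        = -(qh u * (p.1 * (1 - p.1 - p.2)) + qh v * (p.2 * (1 - p.1 - p.2)) +
            qh (v - u) * (p.1 * p.2)) := by
      rw [hinterp]; linarith [hkey]
    show |q (p0 + (p.1 • u + p.2 • v)) - interp p0 (p0 + u) (p0 + v) q (p0 + (p.1 • u + p.2 • v))| = _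
    rw [hval, abs_neg, abs_of_nonneg]
    have t1 : 0 ≤ p.1 * (1 - p.1 - p.2) := mul_nonneg h1 (by linarith)
    have t2 : 0 ≤ p.2 * (1 - p.1 - p.2) := mul_nonneg h2 (by linarith)
    have t3 : 0 ≤ p.1 * p.2 := mul_nonneg h1 h2
    have := hnn u; have := hnn v; have := hnn (v - u)
    positivity
  rw [MeasureTheory.setIntegral_congr_fun measurableSet_stdTri heq]
  rw [integral_stdTri_poly]
  ring

lemma det_ne_zero_of_affineIndependent {z0 z1 z2 : ℝ × ℝ}
    (hT : AffineIndependent ℝ ![z0, z1, z2]) : det2 (z1 - z0) (z2 - z0) ≠ 0 := by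
  intro h
  rw [affineIndependent_iff] at hT
  have key : ∀ c1 c2 : ℝ, c1 * (z1 - z0).1 + c2 * (z2 - z0).1 = 0 →
      c1 * (z1 - z0).2 + c2 * (z2 - z0).2 = 0 → c1 = 0 ∧ c2 = 0 := by
    intro c1 c2 e1 e2
    have hsum : (Finset.univ : Finset (Fin 3)).sum ![-(c1+c2), c1, c2] = 0 := by
      simp [Fin.sum_univ_three]; try ring
    have hcomb : ∑ i, (![-(c1+c2), c1, c2]) i • (![z0, z1, z2]) i = 0 := by
      simp only [Fin.sum_univ_three, Matrix.cons_val_zero, Matrix.cons_val_one,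
        Matrix.head_cons, Matrix.cons_val_two, Matrix.tail_cons]
      have e1' : c1 * (z1.1 - z0.1) + c2 * (z2.1 - z0.1) = 0 := by simpa using e1
      have e2' : c1 * (z1.2 - z0.2) + c2 * (z2.2 - z0.2) = 0 := by simpa using e2
      apply Prod.ext <;>
        simp only [Prod.fst_add, Prod.snd_add, Prod.smul_fst, Prod.smul_snd, smul_eq_mul,
          Prod.fst_zero, Prod.snd_zero, Prod.fst_neg, Prod.snd_neg, neg_mul] <;>
        nlinarith [e1', e2']
    have h1 := hT Finset.univ _ hsum hcomb 1 (Finset.mem_univ _)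
    have h2 := hT Finset.univ _ hsum hcomb 2 (Finset.mem_univ _)
    exact ⟨by simpa using h1, by simpa using h2⟩
  set u := z1 - z0
  set v := z2 - z0
  unfold det2 at h
  by_cases hu2 : u.2 = 0
  · by_cases hu1 : u.1 = 0
    · rcases key 1 0 (by simp [hu1]) (by simp [hu2]) with ⟨h1, _⟩
      norm_num at h1
    · rcases key v.1 (-u.1) (by ring) (by linear_combination -h) with ⟨_, h2⟩
      exact hu1 (by linarith [neg_eq_zero.mp h2])
  · rcases key v.2 (-u.2) (by linear_combination h) (by ring) with ⟨_, h2⟩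
    exact hu2 (by linarith [neg_eq_zero.mp h2])

lemma Ddec_formula (a20 a11 a02 a10 a01 a00 : ℝ) (q qh : ℝ × ℝ → ℝ)
    (hq : q = fun p => a20 * p.1 ^ 2 + 2 * a11 * p.1 * p.2 + a02 * p.2 ^ 2 +
      a10 * p.1 + a01 * p.2 + a00)
    (hqh : qh = fun p => a20 * p.1 ^ 2 + 2 * a11 * p.1 * p.2 + a02 * p.2 ^ 2)
    (hnn : ∀ w : ℝ × ℝ, 0 ≤ qh w)
    (z0 z1 z2 : ℝ × ℝ) (hd : det2 (z1 - z0) (z2 - z0) ≠ 0) :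
    Ddec z0 z1 z2 q = |det2 (z1 - z0) (z2 - z0)| / 24 * qh (z1 - z0) := by
  set m := midpoint ℝ z0 z1 with hm
  have hmval : m = (1/2 : ℝ) • (z0 + z1) := by
    rw [hm, midpoint_eq_smul_add]
    norm_num
  have hd1 : det2 (m - z0) (z2 - z0) = det2 (z1 - z0) (z2 - z0) / 2 := by
    rw [hmval]
    obtain ⟨x0, y0⟩ := z0; obtain ⟨x1, y1⟩ := z1; obtain ⟨x2, y2⟩ := z2
    simp only [det2, Prod.mk_add_mk, Prod.smul_mk, smul_eq_mul, Prod.mk_sub_mk]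
    ring
  have hd2 : det2 (z1 - m) (z2 - m) = det2 (z1 - z0) (z2 - z0) / 2 := by
    rw [hmval]
    obtain ⟨x0, y0⟩ := z0; obtain ⟨x1, y1⟩ := z1; obtain ⟨x2, y2⟩ := z2
    simp only [det2, Prod.mk_add_mk, Prod.smul_mk, smul_eq_mul, Prod.mk_sub_mk]
    ring
  have h1 := interpErr_formula a20 a11 a02 a10 a01 a00 q qh hq hqh hnn z0 z1 z2 hd
  have h2 := interpErr_formula a20 a11 a02 a10 a01 a00 q qh hq hqh hnn z0 m z2
    (by rw [hd1]; exact div_ne_zero hd two_ne_zero)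
  have h3 := interpErr_formula a20 a11 a02 a10 a01 a00 q qh hq hqh hnn m z1 z2
    (by rw [hd2]; exact div_ne_zero hd two_ne_zero)
  rw [Ddec, interpErr, interpErr, interpErr, h1, h2, h3, hd1, hd2]
  rw [abs_div, abs_two]
  -- now a pure algebraic identity
  subst hqh
  rw [hmval]
  obtain ⟨x0, y0⟩ := z0; obtain ⟨x1, y1⟩ := z1; obtain ⟨x2, y2⟩ := z2
  simp only [Prod.mk_add_mk, Prod.smul_mk, smul_eq_mul, Prod.mk_sub_mk]
  ring

lemma det2_cycle (a b c : ℝ × ℝ) : det2 (c - b) (a - b) = det2 (b - a) (c - a) := by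
  obtain ⟨x0, y0⟩ := a; obtain ⟨x1, y1⟩ := b; obtain ⟨x2, y2⟩ := c
  simp only [det2, Prod.mk_sub_mk]
  ring

theorem stmt6 (a20 a11 a02 a10 a01 a00 : ℝ) (q qh : ℝ × ℝ → ℝ)
    (hq : q = fun p => a20 * p.1 ^ 2 + 2 * a11 * p.1 * p.2 + a02 * p.2 ^ 2 +
      a10 * p.1 + a01 * p.2 + a00)
    (hqh : qh = fun p => a20 * p.1 ^ 2 + 2 * a11 * p.1 * p.2 + a02 * p.2 ^ 2)
    (hpos : ∀ v : ℝ × ℝ, v ≠ 0 → 0 < qh v)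
    (z0 z1 z2 : ℝ × ℝ) (hT : AffineIndependent ℝ ![z0, z1, z2]) :
    Ddec z0 z1 z2 q = triArea z0 z1 z2 / 12 * qh (z1 - z0) ∧
    (Ddec z0 z1 z2 q =
        max (max (Ddec z0 z1 z2 q) (Ddec z1 z2 z0 q)) (Ddec z2 z0 z1 q) ↔
      qh (z1 - z0) = max (max (qh (z1 - z0)) (qh (z2 - z1))) (qh (z0 - z2))) := by
  have hd : det2 (z1 - z0) (z2 - z0) ≠ 0 := det_ne_zero_of_affineIndependent hT
  have hnn : ∀ w : ℝ × ℝ, 0 ≤ qh w := by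
    intro w
    by_cases hw : w = 0
    · subst hw; rw [hqh]; norm_num
    · exact le_of_lt (hpos w hw)
  have hD1 := Ddec_formula a20 a11 a02 a10 a01 a00 q qh hq hqh hnn z0 z1 z2 hd
  have hdet12 : det2 (z2 - z1) (z0 - z1) = det2 (z1 - z0) (z2 - z0) := det2_cycle z0 z1 z2
  have hdet20 : det2 (z0 - z2) (z1 - z2) = det2 (z1 - z0) (z2 - z0) := by
    rw [det2_cycle z1 z2 z0]; exact hdet12
  have hD2 := Ddec_formula a20 a11 a02 a10 a01 a00 q qh hq hqh hnn z1 z2 z0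
    (by rw [hdet12]; exact hd)
  have hD3 := Ddec_formula a20 a11 a02 a10 a01 a00 q qh hq hqh hnn z2 z0 z1
    (by rw [hdet20]; exact hd)
  rw [hdet12] at hD2
  rw [hdet20] at hD3
  set A := |det2 (z1 - z0) (z2 - z0)| / 24 with hA
  have hApos : 0 < A := by
    rw [hA]
    have : 0 < |det2 (z1 - z0) (z2 - z0)| := abs_pos.mpr hd
    linarith
  constructor
  · rw [hD1, triArea]
    ring
  · rw [hD1, hD2, hD3]
    rw [← mul_max_of_nonneg _ _ hApos.le, ← mul_max_of_nonneg _ _ hApos.le]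
    constructor
    · intro h; exact mul_left_cancel₀ (ne_of_gt hApos) h
    · intro h; exact congrArg (fun y => A * y) h
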